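/- Let P be a nonconstant polynomial with complex coefficients. Then every complex root of the derivative P' lies in the convex hull (taken in ℂ, regarded as a real vector space) of the set of complex roots of P. -/

import Mathlib

open Polynomial Finset

private lemma derivative_finset_prod' {ι : Type*} [DecidableEq ι] (s : Finset ι) (f : ι → Polynomial ℂ) :
    Polynomial.derivative (∏ b ∈ s, f b) =
      ∑ b ∈ s, (∏ a ∈ s.erase b, f a) * Polynomial.derivative (f b) := by
  induction s using Finset.induction_on with
  | empty => simp
  | @insert i s hi ih =>
    rw [Finset.prod_insert hi, derivative_mul, ih, Finset.sum_insert hi, Finset.mul_sum]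
    congr 1
    · rw [Finset.erase_insert hi, mul_comm]
    · apply Finset.sum_congr rfl
      intro b hb
      rw [Finset.erase_insert_of_ne (fun h => hi (by rw [h]; exact hb)),
        Finset.prod_insert (fun h => hi (Finset.mem_of_mem_erase h))]
      ring

/-- **Gauss–Lucas theorem.** Every complex root of the derivative of a nonconstant
complex polynomial `P` lies in the convex hull (in `ℂ` viewed as a real vector space)
of the set of complex roots of `P`. -/
theorem gauss_lucas (P : Polynomial ℂ) (hP : 1 ≤ P.natDegree)
    (z : ℂ) (hz : P.derivative.IsRoot z) :
    z ∈ convexHull ℝ {w : ℂ | P.IsRoot w} := by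
  by_cases hzP : P.IsRoot z
  · exact subset_convexHull ℝ _ hzP
  have hP0 : P ≠ 0 := fun h => by simp [h] at hP
  have hcard : Multiset.card P.roots = P.natDegree :=
    (splits_iff_card_roots).mp (IsAlgClosed.splits P)
  set l : List ℂ := P.roots.toList with hl
  set n := l.length with hn
  have hln : (l : Multiset ℂ) = P.roots := Multiset.coe_toList _
  have hnn : n = P.natDegree := by
    rw [hn, ← hcard, ← hln]; simp
  set r : Fin n → ℂ := l.get with hr
  have hmem : ∀ i, P.IsRoot (r i) := by
    intro i
    have : r i ∈ l := by simpa [hr] using List.get_mem l i.1 i.isLt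
    exact isRoot_of_mem_roots (by rw [← hln]; exact this)
  set c := P.leadingCoeff with hc
  have hprodeq : ∀ f : ℂ → Polynomial ℂ,
      (Multiset.map f (l : Multiset ℂ)).prod = ∏ i : Fin n, f (r i) := by
    intro f
    calc (Multiset.map f (l : Multiset ℂ)).prod = (l.map f).prod := by simp
      _ = (List.ofFn fun i => f (r i)).prod := by
          conv_lhs => rw [← List.ofFn_get l]
          rw [List.map_ofFn]
          rfl
      _ = ∏ i : Fin n, f (r i) := List.prod_ofFn
  have hfact : C c * ∏ i : Fin n, (X - C (r i)) = P := by
    have := C_leadingCoeff_mul_prod_multiset_X_sub_C (p := P) hcard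
    rw [← hln, hprodeq] at this
    exact this
  have hevalz : P.eval z = c * ∏ i, (z - r i) := by
    rw [← hfact]; simp [eval_prod]
  have hzr : ∀ i, z - r i ≠ 0 := by
    intro i h
    exact hzP (by rw [sub_eq_zero] at h; rw [h]; exact hmem i)
  have hc0 : c ≠ 0 := leadingCoeff_ne_zero.mpr hP0
  have hderiv : P.derivative.eval z = c * ∑ i, ∏ j ∈ univ.erase i, (z - r j) := by
    rw [← hfact, derivative_mul, derivative_C, derivative_finset_prod']
    simp [eval_prod, eval_finset_sum, Finset.mul_sum]
  have hsum0 : ∑ i, ∏ j ∈ univ.erase i, (z - r j) = 0 := by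
    have := hz
    rw [IsRoot, hderiv] at this
    exact (mul_eq_zero.mp this).resolve_left hc0
  have hrecip : ∑ i, (z - r i)⁻¹ = 0 := by
    have hprod : (∏ i, (z - r i)) ≠ 0 := Finset.prod_ne_zero_iff.mpr fun i _ => hzr i
    have key : ∀ i : Fin n, (z - r i)⁻¹ * ∏ j, (z - r j) = ∏ j ∈ univ.erase i, (z - r j) := by
      intro i
      rw [← Finset.prod_erase_mul univ _ (mem_univ i)]
      field_simp [hzr i]
    have : (∑ i, (z - r i)⁻¹) * ∏ j, (z - r j) = 0 := by
      rw [Finset.sum_mul]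
      simp_rw [key]
      exact hsum0
    exact (mul_eq_zero.mp this).resolve_right hprod
  set w : Fin n → ℝ := fun i => (Complex.normSq (z - r i))⁻¹ with hw
  have hwpos : ∀ i, 0 < w i := fun i =>
    inv_pos.mpr (Complex.normSq_pos.mpr (hzr i))
  have hconj : ∑ i, (w i : ℂ) * (z - r i) = 0 := by
    have h := congrArg (starRingEnd ℂ) hrecip
    rw [map_sum, map_zero] at h
    rw [← h]
    apply Finset.sum_congr rfl
    intro i _
    rw [map_inv₀, Complex.inv_def, Complex.normSq_conj, RingHomCompTriple.comp_apply]
    push_cast [hw]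
    simp only [id]
    ring
  have hW : 0 < ∑ i, w i := Finset.sum_pos (fun i _ => hwpos i) (by
    have : 0 < n := by omega
    exact Finset.univ_nonempty_iff.mpr (Fin.pos_iff_nonempty.mp this))
  have hzc : z = Finset.univ.centerMass w r := by
    have h1 : ∑ i, (w i : ℂ) * z = ∑ i, (w i : ℂ) * r i := by
      have h2 := hconj
      simp_rw [mul_sub] at h2
      rw [Finset.sum_sub_distrib, sub_eq_zero] at h2
      exact h2
    have h4 : ∑ i, w i • r i = (∑ i, w i) • z := by
      rw [Complex.real_smul]
      push_cast
      rw [Finset.sum_mul, h1]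
      apply Finset.sum_congr rfl
      intro i _
      rw [Complex.real_smul]
    rw [Finset.centerMass, h4, inv_smul_smul₀ hW.ne']
  rw [hzc]
  exact Finset.centerMass_mem_convexHull _ (fun i _ => (hwpos i).le) hW
    (fun i _ => hmem i)
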